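/- Let U be an open set in ℝⁿ and let Φ be an interval function on U (a real-valued function on closed axis-parallel boxes contained in U that is additive over finite partitions of a box into boxes with pairwise disjoint interiors). If the upper density D̄_Φ(x) = limsup_{x ∈ Q, δ(Q)→0} Φ(Q)/m(Q) (limsup over boxes Q ⊂ U containing x with diameter δ(Q) tending to 0) is finite at every point of U and is locally Lebesgue integrable on U, then for every box Q ⊂ U one has Φ(Q) ≤ ∫_Q D̄_Φ(x) dx. -/

import Mathlib

open MeasureTheory

/-- A (nondegenerate) closed axis-parallel box in `ℝⁿ`. -/
def IsBox {n : ℕ} (Q : Set (Fin n → ℝ)) : Prop :=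
  ∃ a b : Fin n → ℝ, (∀ i, a i < b i) ∧ Q = Set.Icc a b

/-- A finite partition of a box into boxes with pairwise disjoint interiors. -/
def IsBoxPartition {n : ℕ} (Q : Set (Fin n → ℝ)) {m : ℕ}
    (P : Fin m → Set (Fin n → ℝ)) : Prop :=
  (∀ i, IsBox (P i)) ∧ (⋃ i, P i) = Q ∧
    Pairwise fun i j => Disjoint (interior (P i)) (interior (P j))

/-- An interval function on an open set `U`: a real-valued function on closed axis-parallel
boxes contained in `U` that is additive over finite partitions of a box into boxes with
pairwise disjoint interiors. -/
def IsIntervalFunction {n : ℕ} (U : Set (Fin n → ℝ)) (Φ : Set (Fin n → ℝ) → ℝ) : Prop :=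
  ∀ Q : Set (Fin n → ℝ), IsBox Q → Q ⊆ U →
    ∀ (m : ℕ) (P : Fin m → Set (Fin n → ℝ)), IsBoxPartition Q P →
      Φ Q = ∑ i, Φ (P i)

/-- The upper density of an interval function at a point:
`limsup_{x ∈ Q, δ(Q) → 0} Φ(Q)/m(Q) = inf_{ε>0} sup {Φ(Q)/m(Q) : x ∈ Q ⊆ U, δ(Q) ≤ ε}`,
with values in `[-∞, +∞]`. -/
noncomputable def upperDensity {n : ℕ} (U : Set (Fin n → ℝ)) (Φ : Set (Fin n → ℝ) → ℝ)
    (x : Fin n → ℝ) : EReal :=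
  ⨅ (ε : ℝ) (_ : 0 < ε),
    ⨆ (Q : Set (Fin n → ℝ)) (_ : IsBox Q ∧ x ∈ Q ∧ Q ⊆ U ∧ Metric.diam Q ≤ ε),
      ((Φ Q / (volume Q).toReal : ℝ) : EReal)

/-- The lower density of an interval function at a point:
`liminf_{x ∈ Q, δ(Q) → 0} Φ(Q)/m(Q) = sup_{ε>0} inf {Φ(Q)/m(Q) : x ∈ Q ⊆ U, δ(Q) ≤ ε}`,
with values in `[-∞, +∞]`. -/
noncomputable def lowerDensity {n : ℕ} (U : Set (Fin n → ℝ)) (Φ : Set (Fin n → ℝ) → ℝ)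
    (x : Fin n → ℝ) : EReal :=
  ⨆ (ε : ℝ) (_ : 0 < ε),
    ⨅ (Q : Set (Fin n → ℝ)) (_ : IsBox Q ∧ x ∈ Q ∧ Q ⊆ U ∧ Metric.diam Q ≤ ε),
      ((Φ Q / (volume Q).toReal : ℝ) : EReal)

/-- `Φ` has finite density `L` at `x` (relative to `U`): `Φ(Q)/m(Q) → L` as boxes
`Q ⊆ U` containing `x` have diameter tending to `0`. -/
def HasBoxDensityAt {n : ℕ} (U : Set (Fin n → ℝ)) (Φ : Set (Fin n → ℝ) → ℝ)
    (L : ℝ) (x : Fin n → ℝ) : Prop :=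
  ∀ ε > 0, ∃ τ > 0, ∀ Q : Set (Fin n → ℝ), IsBox Q → x ∈ Q → Q ⊆ U →
    Metric.diam Q ≤ τ → |Φ Q / (volume Q).toReal - L| ≤ ε

open Set

lemma split_step {n : ℕ} {U : Set (Fin n → ℝ)} {Φ : Set (Fin n → ℝ) → ℝ}
    (hΦ : IsIntervalFunction U Φ) (g : (Fin n → ℝ) → ℝ)
    (a b : Fin n → ℝ) (hab : ∀ i, a i < b i) (hsub : Icc a b ⊆ U)
    (hg : IntegrableOn g (Icc a b)) (i₀ : Fin n)
    (hlt : ∫ x in Icc a b, g x < Φ (Icc a b)) :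
    ∃ a' b' : Fin n → ℝ, (∀ i, a' i < b' i) ∧ Icc a' b' ⊆ Icc a b ∧
      (∫ x in Icc a' b', g x < Φ (Icc a' b')) ∧
      b' i₀ - a' i₀ = (b i₀ - a i₀) / 2 ∧ ∀ i, i ≠ i₀ → a' i = a i ∧ b' i = b i := by
  set mid : ℝ := (a i₀ + b i₀) / 2 with hmid
  have hm1 : a i₀ < mid := by have := hab i₀; rw [hmid]; linarith
  have hm2 : mid < b i₀ := by have := hab i₀; rw [hmid]; linarith
  set b₁ := Function.update b i₀ mid with hb₁
  set a₂ := Function.update a i₀ mid with ha₂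
  have hab₁ : ∀ i, a i < b₁ i := by
    intro i; rcases eq_or_ne i i₀ with rfl | h
    · simpa [hb₁] using hm1
    · simpa [hb₁, Function.update_of_ne h] using hab i
  have hab₂ : ∀ i, a₂ i < b i := by
    intro i; rcases eq_or_ne i i₀ with rfl | h
    · simpa [ha₂] using hm2
    · simpa [ha₂, Function.update_of_ne h] using hab i
  have hb₁le : b₁ ≤ b := by
    intro i; rcases eq_or_ne i i₀ with rfl | h
    · simpa [hb₁] using hm2.le
    · simp [hb₁, Function.update_of_ne h]
  have ha₂ge : a ≤ a₂ := by
    intro i; rcases eq_or_ne i i₀ with rfl | h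
    · simpa [ha₂] using hm1.le
    · simp [ha₂, Function.update_of_ne h]
  have hsub1 : Icc a b₁ ⊆ Icc a b := Icc_subset_Icc le_rfl hb₁le
  have hsub2 : Icc a₂ b ⊆ Icc a b := Icc_subset_Icc ha₂ge le_rfl
  have hunion : Icc a b₁ ∪ Icc a₂ b = Icc a b := by
    apply Subset.antisymm (union_subset hsub1 hsub2)
    intro x hx
    rcases le_total (x i₀) mid with h | h
    · left
      refine ⟨hx.1, fun i => ?_⟩
      rcases eq_or_ne i i₀ with rfl | hi
      · simpa [hb₁] using h
      · simpa [hb₁, Function.update_of_ne hi] using hx.2 i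
    · right
      refine ⟨fun i => ?_, hx.2⟩
      rcases eq_or_ne i i₀ with rfl | hi
      · simpa [ha₂] using h
      · simpa [ha₂, Function.update_of_ne hi] using hx.1 i
  -- interiors disjoint
  have hdisj : Disjoint (interior (Icc a b₁)) (interior (Icc a₂ b)) := by
    rw [← Set.pi_univ_Icc a b₁, ← Set.pi_univ_Icc a₂ b,
      interior_pi_set finite_univ, interior_pi_set finite_univ]
    rw [Set.disjoint_left]
    intro x hx1 hx2
    have h1 := hx1 i₀ (mem_univ i₀)
    have h2 := hx2 i₀ (mem_univ i₀)
    simp only [Function.comp, interior_Icc, mem_Ioo, hb₁, ha₂, Function.update_self] at h1 h2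
    exact absurd h1.2 (not_lt.mpr h2.1.le)
  -- Φ additivity
  have hΦadd : Φ (Icc a b) = Φ (Icc a b₁) + Φ (Icc a₂ b) := by
    have hpart : IsBoxPartition (Icc a b) ![Icc a b₁, Icc a₂ b] := by
      refine ⟨?_, ?_, ?_⟩
      · intro i; fin_cases i
        · exact ⟨a, b₁, hab₁, rfl⟩
        · exact ⟨a₂, b, hab₂, rfl⟩
      · rw [← hunion]; ext x; simp [Fin.exists_fin_two]
      · intro i j hij
        fin_cases i <;> fin_cases j <;> simp_all <;>
          first
          | exact hdisj
          | exact hdisj.symm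
    have := hΦ (Icc a b) ⟨a, b, hab, rfl⟩ hsub 2 _ hpart
    simpa [Fin.sum_univ_two] using this
  -- integral additivity
  have hnull : volume (Icc a b₁ ∩ Icc a₂ b) = 0 := by
    have : Icc a b₁ ∩ Icc a₂ b ⊆ Icc a₂ b₁ := by
      intro x hx; exact ⟨hx.2.1, hx.1.2⟩
    refine measure_mono_null this ?_
    rw [Real.volume_Icc_pi]
    apply Finset.prod_eq_zero (Finset.mem_univ i₀)
    simp [hb₁, ha₂]
  have hintadd : ∫ x in Icc a b, g x = (∫ x in Icc a b₁, g x) + ∫ x in Icc a₂ b, g x := by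
    rw [← hunion]
    exact integral_union_ae hnull measurableSet_Icc.nullMeasurableSet
      (hg.mono_set hsub1) (hg.mono_set hsub2)
  rcases lt_or_ge (∫ x in Icc a b₁, g x) (Φ (Icc a b₁)) with h | h
  · refine ⟨a, b₁, hab₁, hsub1, h, ?_, ?_⟩
    · simp [hb₁, hmid]; ring
    · intro i hi; simp [hb₁, Function.update_of_ne hi]
  · have h2 : ∫ x in Icc a₂ b, g x < Φ (Icc a₂ b) := by
      rw [hintadd, hΦadd] at hlt; linarith
    refine ⟨a₂, b, hab₂, hsub2, h2, ?_, ?_⟩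
    · simp [ha₂, hmid]; ring
    · intro i hi; simp [ha₂, Function.update_of_ne hi]

lemma halve_upto {n : ℕ} {U : Set (Fin n → ℝ)} {Φ : Set (Fin n → ℝ) → ℝ}
    (hΦ : IsIntervalFunction U Φ) (g : (Fin n → ℝ) → ℝ) (m : ℕ) (hm : m ≤ n) :
    ∀ a b : Fin n → ℝ, (∀ i, a i < b i) → Icc a b ⊆ U → IntegrableOn g (Icc a b) →
      (∫ x in Icc a b, g x < Φ (Icc a b)) →
      ∃ a' b' : Fin n → ℝ, (∀ i, a' i < b' i) ∧ Icc a' b' ⊆ Icc a b ∧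
        (∫ x in Icc a' b', g x < Φ (Icc a' b')) ∧
        (∀ i : Fin n, (i : ℕ) < m → b' i - a' i = (b i - a i) / 2) ∧
        (∀ i : Fin n, m ≤ (i : ℕ) → a' i = a i ∧ b' i = b i) := by
  induction m with
  | zero =>
    intro a b h1 h2 h3 h4
    exact ⟨a, b, h1, subset_rfl, h4, fun i hi => absurd hi (Nat.not_lt_zero _),
      fun i _ => ⟨rfl, rfl⟩⟩
  | succ m ih =>
    intro a b h1 h2 h3 h4
    obtain ⟨a₁, b₁, k1, k2, k3, k4, k5⟩ :=
      ih (Nat.le_of_succ_le hm) a b h1 h2 h3 h4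
    have hmn : m < n := hm
    set i₀ : Fin n := ⟨m, hmn⟩ with hi₀
    obtain ⟨a₂, b₂, j1, j2, j3, j4, j5⟩ :=
      split_step hΦ g a₁ b₁ k1 (k2.trans h2) (h3.mono_set k2) i₀ k3
    refine ⟨a₂, b₂, j1, j2.trans k2, j3, ?_, ?_⟩
    · intro i hi
      rcases eq_or_ne i i₀ with rfl | hne
      · have := k5 i₀ le_rfl
        rw [j4, this.1, this.2]
      · have hne' : (i : ℕ) ≠ m := fun h => hne (Fin.ext h)
        have hi' : (i : ℕ) < m := lt_of_le_of_ne (Nat.lt_succ_iff.mp hi) hne'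
        rw [(j5 i hne).1, (j5 i hne).2]
        exact k4 i hi'
    · intro i hi
      have hne : i ≠ i₀ := by
        intro h; rw [h] at hi; simp [hi₀] at hi
      have h5 := k5 i (le_of_lt hi)
      rw [(j5 i hne).1, (j5 i hne).2, h5.1, h5.2]
      exact ⟨rfl, rfl⟩

/-- **Theorem (upper-density inequality).** If an interval function Φ on an open set
`U ⊆ ℝⁿ` has a finite upper density `D̄_Φ(x) = D x` at every point of `U`, and `D` is
locally Lebesgue integrable on `U`, then `Φ(Q) ≤ ∫_Q D̄_Φ(x) dx` for every box `Q ⊆ U`. -/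
theorem intervalFunction_le_integral_upperDensity {n : ℕ}
    (U : Set (Fin n → ℝ)) (hU : IsOpen U)
    (Φ : Set (Fin n → ℝ) → ℝ) (hΦ : IsIntervalFunction U Φ)
    (D : (Fin n → ℝ) → ℝ)
    (hfin : ∀ x ∈ U, upperDensity U Φ x = (D x : EReal))
    (hloc : LocallyIntegrableOn D U volume) :
    ∀ Q : Set (Fin n → ℝ), IsBox Q → Q ⊆ U → Φ Q ≤ ∫ x in Q, D x := by
  intro Q hQ hQU
  obtain ⟨a₀, b₀, hab₀, rfl⟩ := hQ
  by_contra hcon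
  push_neg at hcon
  have hDint : IntegrableOn D (Icc a₀ b₀) volume :=
    hloc.integrableOn_compact_subset hQU isCompact_Icc
  have hεpos : (0:ℝ) < Φ (Icc a₀ b₀) - ∫ x in Icc a₀ b₀, D x := by linarith
  obtain ⟨g, hDg, hlsc, hgint0, hgtop, hgest⟩ :=
    exists_lt_lowerSemicontinuous_integral_lt (μ := volume.restrict (Icc a₀ b₀)) D hDint hεpos
  set gR : (Fin n → ℝ) → ℝ := fun x => (g x).toReal with hgR
  have hgint : IntegrableOn gR (Icc a₀ b₀) volume := hgint0
  have hstart : ∫ x in Icc a₀ b₀, gR x < Φ (Icc a₀ b₀) := by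
    have h := hgest
    have h2 : ∫ x in Icc a₀ b₀, gR x < (∫ x in Icc a₀ b₀, D x) +
        (Φ (Icc a₀ b₀) - ∫ x in Icc a₀ b₀, D x) := h
    linarith
  -- nested sequence of boxes
  set T := {p : (Fin n → ℝ) × (Fin n → ℝ) //
    (∀ i, p.1 i < p.2 i) ∧ Icc p.1 p.2 ⊆ Icc a₀ b₀ ∧
    ∫ x in Icc p.1 p.2, gR x < Φ (Icc p.1 p.2)} with hT
  have step : ∀ p : T, ∃ q : T, Icc q.1.1 q.1.2 ⊆ Icc p.1.1 p.1.2 ∧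
      ∀ i, q.1.2 i - q.1.1 i = (p.1.2 i - p.1.1 i) / 2 := by
    rintro ⟨⟨a, b⟩, h1, h2, h3⟩
    obtain ⟨a', b', j1, j2, j3, j4, -⟩ :=
      halve_upto hΦ gR n le_rfl a b h1 (h2.trans hQU) (hgint.mono_set h2) h3
    exact ⟨⟨(a', b'), j1, j2.trans h2, j3⟩, j2, fun i => j4 i i.isLt⟩
  choose f hf1 hf2 using step
  set p₀ : T := ⟨(a₀, b₀), hab₀, subset_rfl, hstart⟩ with hp₀
  set seq : ℕ → T := fun k => f^[k] p₀ with hseq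
  have hseqsucc : ∀ k, seq (k+1) = f (seq k) := fun k => Function.iterate_succ_apply' f k p₀
  set A : ℕ → Fin n → ℝ := fun k => (seq k).1.1 with hA
  set B : ℕ → Fin n → ℝ := fun k => (seq k).1.2 with hB
  have hA0 : A 0 = a₀ := rfl
  have hB0 : B 0 = b₀ := rfl
  have hABlt : ∀ k i, A k i < B k i := fun k => (seq k).2.1
  have hABsub : ∀ k, Icc (A k) (B k) ⊆ Icc a₀ b₀ := fun k => (seq k).2.2.1
  have hABint : ∀ k, ∫ x in Icc (A k) (B k), gR x < Φ (Icc (A k) (B k)) :=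
    fun k => (seq k).2.2.2
  have hnest : ∀ k, Icc (A (k+1)) (B (k+1)) ⊆ Icc (A k) (B k) := by
    intro k
    have := hf1 (seq k)
    simpa [hA, hB, hseqsucc k] using this
  have hside : ∀ k i, B k i - A k i = (b₀ i - a₀ i) / 2 ^ k := by
    intro k
    induction k with
    | zero => intro i; simp [hA0, hB0]
    | succ k ih =>
      intro i
      have hstep : B (k+1) i - A (k+1) i = (B k i - A k i) / 2 := by
        simp only [hB, hA, hseqsucc k]; exact hf2 (seq k) i
      rw [hstep, ih i, pow_succ]; ring
  have hmemA : ∀ k, A (k+1) ∈ Icc (A k) (B k) :=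
    fun k => hnest k ⟨le_rfl, fun i => (hABlt (k+1) i).le⟩
  have hmemB : ∀ k, B (k+1) ∈ Icc (A k) (B k) :=
    fun k => hnest k ⟨fun i => (hABlt (k+1) i).le, le_rfl⟩
  have hAmono : ∀ i, Monotone fun k => A k i :=
    fun i => monotone_nat_of_le_succ fun k => (hmemA k).1 i
  have hBanti : ∀ i, Antitone fun k => B k i :=
    fun i => antitone_nat_of_succ_le fun k => (hmemB k).2 i
  set x : Fin n → ℝ := fun i => ⨆ k, A k i with hx
  have hbdd : ∀ i, BddAbove (Set.range fun k => A k i) := by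
    intro i; refine ⟨B 0 i, ?_⟩; rintro - ⟨k, rfl⟩
    exact le_trans (hABlt k i).le (hBanti i (Nat.zero_le k))
  have hxmem : ∀ k, x ∈ Icc (A k) (B k) := by
    intro k
    constructor
    · intro i; exact le_ciSup (hbdd i) k
    · intro i
      refine ciSup_le fun l => ?_
      rcases le_total l k with h | h
      · exact le_trans (hAmono i h) (hABlt k i).le
      · exact le_trans (hABlt l i).le (hBanti i h)
  have hxU : x ∈ U := hQU (hABsub 0 (hxmem 0))
  set S : ℝ := ∑ i, (b₀ i - a₀ i) with hS
  have hS0 : 0 ≤ S := Finset.sum_nonneg fun i _ => sub_nonneg.mpr (hab₀ i).le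
  have hdiam : ∀ k, Metric.diam (Icc (A k) (B k)) ≤ S / 2 ^ k := by
    intro k
    apply Metric.diam_le_of_forall_dist_le (by positivity)
    intro y hy z hz
    rw [dist_pi_le_iff (by positivity)]
    intro i
    have h1 := hy.1 i; have h2 := hy.2 i; have h3 := hz.1 i; have h4 := hz.2 i
    have h5 : B k i - A k i ≤ S / 2 ^ k := by
      rw [hside k i]
      gcongr
      exact Finset.single_le_sum (fun j _ => sub_nonneg.mpr (hab₀ j).le) (Finset.mem_univ i)
    rw [Real.dist_eq, abs_sub_le_iff]
    constructor <;> linarith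
  -- pick t between D x and g x
  obtain ⟨t, ht1, ht2⟩ := EReal.exists_between_coe_real (hDg x)
  have hud : upperDensity U Φ x < (t : EReal) := by rw [hfin x hxU]; exact ht1
  rw [upperDensity] at hud
  obtain ⟨ε, hud2⟩ := iInf_lt_iff.mp hud
  obtain ⟨hεpos', hud3⟩ := iInf_lt_iff.mp hud2
  obtain ⟨r, hrpos, hball⟩ := Metric.eventually_nhds_iff.mp (hlsc x (t : EReal) ht2)
  have hmin : 0 < min ε r := lt_min hεpos' hrpos
  obtain ⟨k, hk⟩ := pow_unbounded_of_one_lt (S / min ε r) (one_lt_two (α := ℝ))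
  have h2k : (0:ℝ) < 2 ^ k := by positivity
  have hSk : S / 2 ^ k < min ε r := by
    rw [div_lt_iff₀ h2k]
    have := (div_lt_iff₀ hmin).mp hk
    linarith
  set Qk := Icc (A k) (B k) with hQk
  have hQkU : Qk ⊆ U := (hABsub k).trans hQU
  have hdk : Metric.diam Qk ≤ ε :=
    le_trans (hdiam k) (le_of_lt (lt_of_lt_of_le hSk (min_le_left _ _)))
  have hbox : IsBox Qk := ⟨A k, B k, hABlt k, rfl⟩
  have hsup : ((Φ Qk / (volume Qk).toReal : ℝ) : EReal) < (t : EReal) := by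
    refine lt_of_le_of_lt ?_ hud3
    exact le_iSup₂ (f := fun (Q : Set (Fin n → ℝ))
      (_ : IsBox Q ∧ x ∈ Q ∧ Q ⊆ U ∧ Metric.diam Q ≤ ε) =>
      ((Φ Q / (volume Q).toReal : ℝ) : EReal)) Qk ⟨hbox, hxmem k, hQkU, hdk⟩
  have hvpos : 0 < (volume Qk).toReal := by
    rw [hQk, Real.volume_Icc_pi_toReal (fun i => (hABlt k i).le)]
    exact Finset.prod_pos fun i _ => sub_pos.mpr (hABlt k i)
  have hΦt : Φ Qk < t * (volume Qk).toReal := by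
    have h := EReal.coe_lt_coe_iff.mp hsup
    have := (div_lt_iff₀ hvpos).mp h
    linarith
  have htop' : ∀ᵐ z ∂(volume.restrict Qk), g z < ⊤ :=
    ae_restrict_of_ae_restrict_of_subset (hABsub k) hgtop
  have hQkb : Bornology.IsBounded Qk := isCompact_Icc.isBounded
  have haet : (fun _ => t) ≤ᵐ[volume.restrict Qk] gR := by
    filter_upwards [htop', ae_restrict_mem measurableSet_Icc] with z hz hzm
    have hdist : dist z x < r := by
      calc dist z x ≤ Metric.diam Qk := Metric.dist_le_diam_of_mem hQkb hzm (hxmem k)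
        _ ≤ S / 2 ^ k := hdiam k
        _ < r := lt_of_lt_of_le hSk (min_le_right _ _)
    have hgz : (t : EReal) < g z := hball hdist
    have hgbot : g z ≠ ⊥ := ((EReal.bot_lt_coe t).trans hgz).ne'
    have hco : ((g z).toReal : EReal) = g z := EReal.coe_toReal (ne_of_lt hz) hgbot
    rw [← hco] at hgz
    exact (EReal.coe_lt_coe_iff.mp hgz).le
  have hgint' : IntegrableOn gR Qk volume := hgint.mono_set (hABsub k)
  have hconst : IntegrableOn (fun _ => t) Qk volume :=
    integrableOn_const isCompact_Icc.measure_lt_top.ne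
  have hint1 : t * (volume Qk).toReal ≤ ∫ z in Qk, gR z := by
    have h := integral_mono_ae hconst hgint' haet
    rwa [setIntegral_const, smul_eq_mul, mul_comm] at h
  have hfinal := hABint k
  rw [← hQk] at hfinal
  linarith
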